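/- Let 0 ≤ n ≤ 7 and let d, a₁, …, aₙ be integers with 3d + Σᵢaᵢ = 1. Then d² − Σᵢaᵢ² < 0. (Hence any class in H₂(𝔻ₙ;ℤ), n ≤ 7, with c₁ = 1 has strictly negative self-intersection; this fails for n = 8 because of the class 3H − E₁ − ⋯ − E₈.) -/

import Mathlib

/-- For `0 ≤ n ≤ 7` and integers `d, a₁, …, aₙ` with `3d + Σᵢ aᵢ = 1`
(i.e. the class `dH + Σ aᵢEᵢ ∈ H₂(𝔻ₙ;ℤ)` has `c₁ = 1`, equivalently symplectic area `1`
for the monotone form), the self-intersection `d² − Σᵢ aᵢ²` is strictly negative. -/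
theorem area_one_class_has_negative_square (n : ℕ) (hn : n ≤ 7)
    (d : ℤ) (a : Fin n → ℤ)
    (hc1 : 3 * d + ∑ i, a i = 1) :
    d ^ 2 - ∑ i, (a i) ^ 2 < 0 := by
  set s := ∑ i, a i with hs
  set Q := ∑ i, (a i) ^ 2 with hQ
  have hCS : s ^ 2 ≤ (n : ℤ) * Q := by
    simpa using sq_sum_le_card_mul_sum_sq (s := Finset.univ) (f := a)
  have hQ0 : 0 ≤ Q := Finset.sum_nonneg fun i _ => sq_nonneg _
  have h7 : s ^ 2 ≤ 7 * Q := le_trans hCS (by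
    have : (n : ℤ) ≤ 7 := by exact_mod_cast hn
    nlinarith)
  have habs : |s| ≤ Q := by
    calc |s| ≤ ∑ i, |a i| := Finset.abs_sum_le_sum_abs _ _
    _ ≤ Q := Finset.sum_le_sum fun i _ => by
        rcases (abs_nonneg (a i)).eq_or_lt with h | h
        · simp [← h]; positivity
        · nlinarith [sq_abs (a i)]
  have hB : -Q ≤ s ∧ s ≤ Q := abs_le.mp habs
  have hsd : s = 1 - 3 * d := by omega
  rcases le_or_gt d 0 with hd | hd
  · nlinarith [hB.1, hB.2]
  · rcases le_or_gt d 2 with hd2 | hd2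
    · interval_cases d <;> omega
    · nlinarith [hB.1, hB.2]
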